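/- Let n, ν be positive integers and let G be a finite simple graph with at most n vertices, matching number at most ν, and 2ν+2 ≤ n. If the independence number of G is strictly less than n − ν and (2ν+1 choose 2) < (n−ν)ν + (ν choose 2), then the number of edges of G is strictly less than (n−ν)ν + (ν choose 2). -/

import Mathlib

/-- The number of edges of a simple graph. -/
noncomputable def edgeCount {V : Type*} (G : SimpleGraph V) : ℕ := G.edgeSet.ncard

/-- The independence number: largest size of a set of pairwise nonadjacent vertices. -/
noncomputable def indNum {V : Type*} (G : SimpleGraph V) : ℕ :=
  sSup {n | ∃ s : Finset V, (∀ x ∈ s, ∀ y ∈ s, ¬ G.Adj x y) ∧ s.card = n}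

/-- A finite set of edges of `G` forming a matching (pairwise vertex-disjoint edges). -/
def IsMatchingFinset {V : Type*} (G : SimpleGraph V) (m : Finset (Sym2 V)) : Prop :=
  ↑m ⊆ G.edgeSet ∧ ∀ e ∈ m, ∀ f ∈ m, e ≠ f → ∀ v : V, ¬(v ∈ e ∧ v ∈ f)

/-- The matching number: largest size of a matching. -/
noncomputable def matNum {V : Type*} (G : SimpleGraph V) : ℕ :=
  sSup {n | ∃ m : Finset (Sym2 V), IsMatchingFinset G m ∧ m.card = n}

/-- The maximum degree. -/
noncomputable def maxDeg {V : Type*} (G : SimpleGraph V) : ℕ :=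
  ⨆ v, (G.neighborSet v).ncard

/-- `Gext α ν`: disjoint union of `K_{2ν+1}` with `α - 1` isolated vertices. -/
def Gext (α ν : ℕ) : SimpleGraph (Fin (2*ν+1) ⊕ Fin (α-1)) :=
  SimpleGraph.fromRel (fun x y => x.isLeft = true ∧ y.isLeft = true)

/-- `Hext α ν`: the complete split graph: clique of size `ν` joined to an
independent set of size `α`. -/
def Hext (α ν : ℕ) : SimpleGraph (Fin ν ⊕ Fin α) :=
  SimpleGraph.fromRel (fun x _ => x.isLeft = true)

/-- `Fext α Δ`: disjoint union of `α` copies of `K_{Δ+1}`. -/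
def Fext (α Δ : ℕ) : SimpleGraph (Fin α × Fin (Δ+1)) :=
  SimpleGraph.fromRel (fun x y => x.1 = y.1)

/-- `Jgraph Δ`: for even `Δ` this is `K_{Δ+1}`; for odd `Δ = 2j-1` it is `K_{2j}`
minus a perfect matching (vertices `2k, 2k+1` are nonadjacent) together with an extra
vertex (the last one) joined to all but one (vertex `0`) of the other vertices. -/
def Jgraph (Δ : ℕ) : SimpleGraph (Fin (2*((Δ+1)/2)+1)) :=
  SimpleGraph.fromRel (fun x y =>
    if Δ % 2 = 0 then True
    else (x.val < 2*((Δ+1)/2) ∧ y.val < 2*((Δ+1)/2) ∧ x.val/2 ≠ y.val/2) ∨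
         (x.val = 2*((Δ+1)/2) ∧ 0 < y.val ∧ y.val < 2*((Δ+1)/2)))

/-- `G` is edge-extremal for `(α, ν)`: it has independence number `α`, matching number `ν`,
and the maximum number of edges among all finite simple graphs with independence number `α`
and matching number `ν`. -/
def EdgeExtremal {V : Type*} [Fintype V] (G : SimpleGraph V) (α ν : ℕ) : Prop :=
  indNum G = α ∧ matNum G = ν ∧
    ∀ (W : Type) [Fintype W] (H : SimpleGraph W),
      indNum H = α → matNum H = ν → edgeCount H ≤ edgeCount G
open Finset

section Basics
variable {V : Type*} [Fintype V] {G : SimpleGraph V}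

lemma sym2_eq_of_mem {e : Sym2 V} {x y : V} (hx : x ∈ e) (hy : y ∈ e) (hxy : x ≠ y) :
    e = s(x, y) := by
  induction e with
  | _ a b =>
    simp only [Sym2.mem_iff] at hx hy
    rcases hx with rfl | rfl <;> rcases hy with rfl | rfl <;>
      first | exact absurd rfl hxy | rfl | exact Sym2.eq_swap

lemma card_le_matNum {M : Finset (Sym2 V)} (hM : IsMatchingFinset G M) :
    M.card ≤ matNum G := by
  classical
  apply le_csSup
  · refine ⟨Fintype.card (Sym2 V), ?_⟩
    rintro c ⟨m, _, rfl⟩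
    exact Finset.card_le_univ m
  · exact ⟨M, hM, rfl⟩

lemma exists_max_matching (G : SimpleGraph V) :
    ∃ M : Finset (Sym2 V), IsMatchingFinset G M ∧ M.card = matNum G := by
  classical
  have hne : {n | ∃ m : Finset (Sym2 V), IsMatchingFinset G m ∧ m.card = n}.Nonempty :=
    ⟨0, ∅, ⟨by simp, by simp⟩, rfl⟩
  have hbdd : BddAbove {n | ∃ m : Finset (Sym2 V), IsMatchingFinset G m ∧ m.card = n} := by
    refine ⟨Fintype.card (Sym2 V), ?_⟩
    rintro c ⟨m, _, rfl⟩
    exact Finset.card_le_univ m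
  have := Nat.sSup_mem hne hbdd
  obtain ⟨M, hM, hMc⟩ := this
  exact ⟨M, hM, hMc⟩

lemma card_le_indNum {s : Finset V} (hs : ∀ x ∈ s, ∀ y ∈ s, ¬ G.Adj x y) :
    s.card ≤ indNum G := by
  classical
  apply le_csSup
  · refine ⟨Fintype.card V, ?_⟩
    rintro c ⟨t, _, rfl⟩
    exact Finset.card_le_univ t
  · exact ⟨s, hs, rfl⟩

lemma edgeCount_eq [DecidableEq V] [DecidableRel G.Adj] :
    edgeCount G = G.edgeFinset.card := by
  simp [edgeCount, SimpleGraph.edgeFinset, Set.ncard_eq_toFinset_card']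

end Basics

section Aug
variable {V : Type*} [Fintype V] [DecidableEq V] {G : SimpleGraph V} [DecidableRel G.Adj]
  (M : Finset (Sym2 V))

def mW (G : SimpleGraph V) (M : Finset (Sym2 V)) : Finset V :=
  univ.filter (fun v => ∀ e ∈ M, v ∉ e)

def NW (G : SimpleGraph V) [DecidableRel G.Adj] (M : Finset (Sym2 V)) (v : V) : Finset V :=
  (mW G M).filter (fun u => G.Adj v u)

variable {M}

lemma mem_mW {v : V} : v ∈ mW G M ↔ ∀ e ∈ M, v ∉ e := by simp [mW]

lemma mem_NW {v u : V} : u ∈ NW G M v ↔ u ∈ mW G M ∧ G.Adj v u := by simp [NW]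

lemma aug_contra (hM : IsMatchingFinset G M)
    (hmax : ∀ M' : Finset (Sym2 V), IsMatchingFinset G M' → M'.card ≤ M.card)
    (R Aa : Finset (Sym2 V)) (hR : R ⊆ M) (hAe : ↑Aa ⊆ G.edgeSet)
    (hdisj : ∀ f ∈ Aa, ∀ f' ∈ Aa, f ≠ f' → ∀ v : V, ¬(v ∈ f ∧ v ∈ f'))
    (hAM : ∀ f ∈ Aa, ∀ e ∈ M, e ∉ R → ∀ v : V, ¬(v ∈ f ∧ v ∈ e))
    (hcard : R.card < Aa.card) : False := by
  classical
  set M' : Finset (Sym2 V) := (M \ R) ∪ Aa with hM'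
  have hdisjMA : Disjoint (M \ R) Aa := by
    rw [Finset.disjoint_left]
    intro f hf hf'
    rcases Finset.mem_sdiff.1 hf with ⟨hfM, hfR⟩
    exact hAM f hf' f hfM hfR f.out.1 ⟨Sym2.out_fst_mem f, Sym2.out_fst_mem f⟩
  have hM'm : IsMatchingFinset G M' := by
    constructor
    · intro e he
      rcases Finset.mem_union.1 he with h | h
      · exact hM.1 (Finset.mem_sdiff.1 h).1
      · exact hAe h
    · intro e he f hf hef v hv
      rcases Finset.mem_union.1 he with he' | he' <;> rcases Finset.mem_union.1 hf with hf' | hf'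
      · exact hM.2 e (Finset.mem_sdiff.1 he').1 f (Finset.mem_sdiff.1 hf').1 hef v hv
      · exact hAM f hf' e (Finset.mem_sdiff.1 he').1 (Finset.mem_sdiff.1 he').2 v ⟨hv.2, hv.1⟩
      · exact hAM e he' f (Finset.mem_sdiff.1 hf').1 (Finset.mem_sdiff.1 hf').2 v hv
      · exact hdisj e he' f hf' hef v hv
  have hcard' : M'.card = (M.card - R.card) + Aa.card := by
    rw [Finset.card_union_of_disjoint hdisjMA, Finset.card_sdiff_of_subset hR]
  have hle := hmax M' hM'm
  have hRM : R.card ≤ M.card := Finset.card_le_card hR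
  omega

variable (hM : IsMatchingFinset G M)
include hM

lemma cover_eq {e f : Sym2 V} {v : V} (he : e ∈ M) (hf : f ∈ M) (hve : v ∈ e)
    (hvf : v ∈ f) : e = f := by
  by_contra h
  exact hM.2 e he f hf h v ⟨hve, hvf⟩

lemma ne_endpoints {e : Sym2 V} {a b : V} (he : e ∈ M) (hab : s(a,b) = e) : a ≠ b := by
  intro h
  exact G.not_isDiag_of_mem_edgeSet (hM.1 he) (hab ▸ (by simp [h]))

variable (hmax : ∀ M' : Finset (Sym2 V), IsMatchingFinset G M' → M'.card ≤ M.card)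
include hmax

lemma W_indep {x y : V} (hx : x ∈ mW G M) (hy : y ∈ mW G M) : ¬ G.Adj x y := by
  intro hadj
  refine aug_contra (G := G) hM hmax ∅ {s(x, y)} (by simp) ?_ ?_ ?_ (by simp)
  · intro f hf; simp at hf; subst hf; exact hadj
  · intro f hf f' hf' hne; simp at hf hf'; subst hf; subst hf'; exact absurd rfl hne
  · intro f hf e heM _ v ⟨hvf, hve⟩
    simp only [Finset.mem_singleton] at hf; subst hf
    rw [Sym2.mem_iff] at hvf
    rcases hvf with rfl | rfl
    · exact mem_mW.1 hx e heM hve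
    · exact mem_mW.1 hy e heM hve

lemma augA {e : Sym2 V} {a b wb : V} (he : e ∈ M) (hab : s(a,b) = e)
    (ha2 : 2 ≤ (NW G M a).card) (hwb : wb ∈ NW G M b) : False := by
  obtain ⟨w1, hw1, hw1wb⟩ :=
    Finset.exists_mem_ne (lt_of_lt_of_le one_lt_two ha2) wb
  have hw1' := mem_NW.1 hw1
  have hwb' := mem_NW.1 hwb
  have hanotW : a ∉ mW G M := fun h => mem_mW.1 h e he (hab ▸ Sym2.mem_mk_left a b)
  have hbnotW : b ∉ mW G M := fun h => mem_mW.1 h e he (hab ▸ Sym2.mem_mk_right a b)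
  have hne : a ≠ b := ne_endpoints hM he hab
  have hbw1 : b ≠ w1 := fun h => hbnotW (h ▸ hw1'.1)
  have haw1 : a ≠ w1 := fun h => hanotW (h ▸ hw1'.1)
  have hbwb : b ≠ wb := fun h => hbnotW (h ▸ hwb'.1)
  have hawb : a ≠ wb := fun h => hanotW (h ▸ hwb'.1)
  refine aug_contra (G := G) hM hmax {e} {s(a,w1), s(b,wb)} (by simpa using he) ?_ ?_ ?_ ?_
  · intro f hf
    simp only [Finset.coe_insert, Set.mem_insert_iff, Finset.coe_singleton,
      Set.mem_singleton_iff] at hf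
    rcases hf with rfl | rfl
    · exact hw1'.2
    · exact hwb'.2
  · intro f hf f' hf' hne' v ⟨hv1, hv2⟩
    simp only [Finset.mem_insert, Finset.mem_singleton] at hf hf'
    rcases hf with rfl | rfl <;> rcases hf' with rfl | rfl <;>
      simp only [Sym2.mem_iff] at hv1 hv2 <;>
      first
      | exact hne' rfl
      | (rcases hv1 with rfl | rfl <;> rcases hv2 with rfl | rfl <;> simp_all)
  · intro f hf e' he' hne' v ⟨hvf, hve⟩
    simp only [Finset.mem_insert, Finset.mem_singleton] at hf
    simp only [Finset.mem_singleton] at hne'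
    have hve'' : v ∈ e → False := fun hv =>
      hM.2 e he e' he' (fun h => hne' h.symm) v ⟨hv, hve⟩
    rcases hf with rfl | rfl <;> rw [Sym2.mem_iff] at hvf
    · rcases hvf with h | h
      · exact hve'' (h.symm ▸ (hab ▸ Sym2.mem_mk_left a b))
      · exact mem_mW.1 (h.symm ▸ hw1'.1) e' he' hve
    · rcases hvf with h | h
      · exact hve'' (h.symm ▸ (hab ▸ Sym2.mem_mk_right a b))
      · exact mem_mW.1 (h.symm ▸ hwb'.1) e' he' hve
  · have h12 : s(a, w1) ≠ s(b, wb) := by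
      intro h
      rw [Sym2.eq_iff] at h
      rcases h with ⟨h1, _⟩ | ⟨_, h2⟩
      · exact hne h1
      · exact hbw1 h2.symm
    rw [Finset.card_singleton, Finset.card_insert_of_notMem (by simpa using h12),
      Finset.card_singleton]
    omega


lemma aug_pairs (R : Finset (Sym2 V)) (hR : R ⊆ M) (L : Finset (V × V))
    (hadj : ∀ p ∈ L, G.Adj p.1 p.2)
    (hvert : ∀ p ∈ L, ∀ z : V, (z = p.1 ∨ z = p.2) → (∃ e ∈ R, z ∈ e) ∨ z ∈ mW G M)
    (hdisj : ∀ p ∈ L, ∀ q ∈ L, p ≠ q →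
      ∀ z : V, (z = p.1 ∨ z = p.2) → (z = q.1 ∨ z = q.2) → False)
    (hcard : R.card < L.card) : False := by
  classical
  have hmem : ∀ p : V × V, ∀ z : V, z ∈ Sym2.mk.uncurry p ↔ (z = p.1 ∨ z = p.2) := by
    rintro ⟨p1, p2⟩ z; exact Sym2.mem_iff
  have hinj : Set.InjOn Sym2.mk.uncurry (L : Set (V × V)) := by
    intro p hp q hq hpq
    by_contra hne
    refine hdisj p hp q hq hne p.1 (Or.inl rfl) ?_
    rw [← hmem q p.1, ← hpq, hmem p p.1]
    exact Or.inl rfl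
  refine aug_contra (G := G) hM hmax R (L.image Sym2.mk.uncurry) hR ?_ ?_ ?_ ?_
  · rintro f hf
    simp only [Finset.coe_image, Set.mem_image, Finset.mem_coe] at hf
    obtain ⟨p, hp, rfl⟩ := hf
    exact hadj p hp
  · intro f hf f' hf' hne v ⟨hv1, hv2⟩
    obtain ⟨p, hp, rfl⟩ := Finset.mem_image.1 hf
    obtain ⟨q, hq, rfl⟩ := Finset.mem_image.1 hf'
    exact hdisj p hp q hq (fun h => hne (h ▸ rfl)) v ((hmem p v).1 hv1) ((hmem q v).1 hv2)
  · intro f hf e he heR v ⟨hv1, hv2⟩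
    obtain ⟨p, hp, rfl⟩ := Finset.mem_image.1 hf
    rcases hvert p hp v ((hmem p v).1 hv1) with ⟨e', he', hve'⟩ | hW
    · exact hM.2 e he e' (hR he') (fun h => heR (h ▸ he')) v ⟨hv2, hve'⟩
    · exact mem_mW.1 hW e he hv2
  · rwa [Finset.card_image_of_injOn hinj]
lemma augB {e l : Sym2 V} {a b x y : V} (he : e ∈ M) (hab : s(a,b) = e)
    (ha2 : 2 ≤ (NW G M a).card) (hl : l ∈ M) (hle : l ≠ e) (hxy : s(x,y) = l)
    (hy : (NW G M y).Nonempty) (hadjbx : G.Adj b x) : False := by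
  obtain ⟨wy, hwy⟩ := hy
  obtain ⟨w1, hw1, hw1wy⟩ :=
    Finset.exists_mem_ne (lt_of_lt_of_le one_lt_two ha2) wy
  have hw1' := mem_NW.1 hw1
  have hwy' := mem_NW.1 hwy
  have hae : a ∈ e := hab ▸ Sym2.mem_mk_left a b
  have hbe : b ∈ e := hab ▸ Sym2.mem_mk_right a b
  have hxl : x ∈ l := hxy ▸ Sym2.mem_mk_left x y
  have hyl : y ∈ l := hxy ▸ Sym2.mem_mk_right x y
  have h1 : a ≠ b := ne_endpoints hM he hab
  have h2 : x ≠ y := ne_endpoints hM hl hxy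
  have hel : ∀ z : V, z ∈ e → z ∈ l → False := fun z hz hz' =>
    hle (cover_eq hM he hl hz hz').symm
  have hcov : ∀ z : V, z ∈ e ∨ z ∈ l → z ∉ mW G M := by
    rintro z (hz | hz) hzW
    exacts [mem_mW.1 hzW e he hz, mem_mW.1 hzW l hl hz]
  have hax : a ≠ x := fun h => hel a hae (h.symm ▸ hxl)
  have hay : a ≠ y := fun h => hel a hae (h.symm ▸ hyl)
  have hbx : b ≠ x := fun h => hel b hbe (h.symm ▸ hxl)
  have hby : b ≠ y := fun h => hel b hbe (h.symm ▸ hyl)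
  have haw1 : a ≠ w1 := fun h => hcov a (Or.inl hae) (h ▸ hw1'.1)
  have hbw1 : b ≠ w1 := fun h => hcov b (Or.inl hbe) (h ▸ hw1'.1)
  have hxw1 : x ≠ w1 := fun h => hcov x (Or.inr hxl) (h ▸ hw1'.1)
  have hyw1 : y ≠ w1 := fun h => hcov y (Or.inr hyl) (h ▸ hw1'.1)
  have hawy : a ≠ wy := fun h => hcov a (Or.inl hae) (h ▸ hwy'.1)
  have hbwy : b ≠ wy := fun h => hcov b (Or.inl hbe) (h ▸ hwy'.1)
  have hxwy : x ≠ wy := fun h => hcov x (Or.inr hxl) (h ▸ hwy'.1)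
  have hywy : y ≠ wy := fun h => hcov y (Or.inr hyl) (h ▸ hwy'.1)
  refine aug_pairs (G := G) hM hmax {e, l} (Finset.insert_subset_iff.2 ⟨he, by simpa using hl⟩)
    {(a,w1), (b,x), (y,wy)} ?_ ?_ ?_ ?_
  · intro p hp
    simp only [Finset.mem_insert, Finset.mem_singleton] at hp
    rcases hp with rfl | rfl | rfl
    · exact hw1'.2
    · exact hadjbx
    · exact hwy'.2
  · intro p hp z hz
    simp only [Finset.mem_insert, Finset.mem_singleton] at hp
    rcases hp with rfl | rfl | rfl <;> rcases hz with rfl | rfl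
    · exact Or.inl ⟨e, by simp, hae⟩
    · exact Or.inr hw1'.1
    · exact Or.inl ⟨e, by simp, hbe⟩
    · exact Or.inl ⟨l, by simp, hxl⟩
    · exact Or.inl ⟨l, by simp, hyl⟩
    · exact Or.inr hwy'.1
  · intro p hp q hq hne z hzp hzq
    simp only [Finset.mem_insert, Finset.mem_singleton] at hp hq
    rcases hp with rfl | rfl | rfl <;> rcases hq with rfl | rfl | rfl <;>
      first
      | exact hne rfl
      | (rcases hzp with rfl | rfl <;> rcases hzq with h | h <;> simp_all)
  · have hL : ({(a,w1), (b,x), (y,wy)} : Finset (V × V)).card = 3 := by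
      have n1 : ((a,w1) : V × V) ∉ ({(b,x), (y,wy)} : Finset (V × V)) := by
        simp only [Finset.mem_insert, Finset.mem_singleton, Prod.mk.injEq, not_or]
        exact ⟨fun h => absurd h.1 h1, fun h => absurd h.1 hay⟩
      have n2 : ((b,x) : V × V) ∉ ({(y,wy)} : Finset (V × V)) := by
        simp only [Finset.mem_singleton, Prod.mk.injEq]
        exact fun h => absurd h.1 hby
      rw [Finset.card_insert_of_notMem n1, Finset.card_insert_of_notMem n2,
        Finset.card_singleton]
    rw [hL]
    exact lt_of_le_of_lt (Finset.card_insert_le e {l}) (by simp)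

lemma augC {e f l : Sym2 V} {a b c d x y : V} (he : e ∈ M) (hab : s(a,b) = e)
    (ha2 : 2 ≤ (NW G M a).card) (hf : f ∈ M) (hcd : s(c,d) = f) (hc2 : 2 ≤ (NW G M c).card)
    (hef : e ≠ f) (hl : l ∈ M) (hle : l ≠ e) (hlf : l ≠ f) (hxy : s(x,y) = l)
    (hadjbx : G.Adj b x) (hadjdy : G.Adj d y) : False := by
  obtain ⟨w2, hw2⟩ := Finset.card_pos.1 (lt_of_lt_of_le two_pos hc2)
  obtain ⟨w1, hw1, hw1w2⟩ :=
    Finset.exists_mem_ne (lt_of_lt_of_le one_lt_two ha2) w2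
  have hw1' := mem_NW.1 hw1
  have hw2' := mem_NW.1 hw2
  have hae : a ∈ e := hab ▸ Sym2.mem_mk_left a b
  have hbe : b ∈ e := hab ▸ Sym2.mem_mk_right a b
  have hcf : c ∈ f := hcd ▸ Sym2.mem_mk_left c d
  have hdf : d ∈ f := hcd ▸ Sym2.mem_mk_right c d
  have hxl : x ∈ l := hxy ▸ Sym2.mem_mk_left x y
  have hyl : y ∈ l := hxy ▸ Sym2.mem_mk_right x y
  have h1 : a ≠ b := ne_endpoints hM he hab
  have h2 : c ≠ d := ne_endpoints hM hf hcd
  have h3 : x ≠ y := ne_endpoints hM hl hxy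
  have hd2 : ∀ z : V, z ∈ e → z ∈ f → False := fun z hz hz' => hef (cover_eq hM he hf hz hz')
  have hd3 : ∀ z : V, z ∈ e → z ∈ l → False := fun z hz hz' =>
    hle (cover_eq hM he hl hz hz').symm
  have hd4 : ∀ z : V, z ∈ f → z ∈ l → False := fun z hz hz' =>
    hlf (cover_eq hM hf hl hz hz').symm
  have hcov : ∀ z : V, z ∈ e ∨ z ∈ f ∨ z ∈ l → z ∉ mW G M := by
    rintro z (hz | hz | hz) hzW
    exacts [mem_mW.1 hzW e he hz, mem_mW.1 hzW f hf hz, mem_mW.1 hzW l hl hz]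
  have hac : a ≠ c := fun h => hd2 a hae (h.symm ▸ hcf)
  have had : a ≠ d := fun h => hd2 a hae (h.symm ▸ hdf)
  have hbc : b ≠ c := fun h => hd2 b hbe (h.symm ▸ hcf)
  have hbd : b ≠ d := fun h => hd2 b hbe (h.symm ▸ hdf)
  have hax : a ≠ x := fun h => hd3 a hae (h.symm ▸ hxl)
  have hay : a ≠ y := fun h => hd3 a hae (h.symm ▸ hyl)
  have hbx : b ≠ x := fun h => hd3 b hbe (h.symm ▸ hxl)
  have hby : b ≠ y := fun h => hd3 b hbe (h.symm ▸ hyl)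
  have hcx : c ≠ x := fun h => hd4 c hcf (h.symm ▸ hxl)
  have hcy : c ≠ y := fun h => hd4 c hcf (h.symm ▸ hyl)
  have hdx : d ≠ x := fun h => hd4 d hdf (h.symm ▸ hxl)
  have hdy : d ≠ y := fun h => hd4 d hdf (h.symm ▸ hyl)
  have haw1 : a ≠ w1 := fun h => hcov a (Or.inl hae) (h ▸ hw1'.1)
  have hbw1 : b ≠ w1 := fun h => hcov b (Or.inl hbe) (h ▸ hw1'.1)
  have hcw1 : c ≠ w1 := fun h => hcov c (Or.inr (Or.inl hcf)) (h ▸ hw1'.1)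
  have hdw1 : d ≠ w1 := fun h => hcov d (Or.inr (Or.inl hdf)) (h ▸ hw1'.1)
  have hxw1 : x ≠ w1 := fun h => hcov x (Or.inr (Or.inr hxl)) (h ▸ hw1'.1)
  have hyw1 : y ≠ w1 := fun h => hcov y (Or.inr (Or.inr hyl)) (h ▸ hw1'.1)
  have haw2 : a ≠ w2 := fun h => hcov a (Or.inl hae) (h ▸ hw2'.1)
  have hbw2 : b ≠ w2 := fun h => hcov b (Or.inl hbe) (h ▸ hw2'.1)
  have hcw2 : c ≠ w2 := fun h => hcov c (Or.inr (Or.inl hcf)) (h ▸ hw2'.1)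
  have hdw2 : d ≠ w2 := fun h => hcov d (Or.inr (Or.inl hdf)) (h ▸ hw2'.1)
  have hxw2 : x ≠ w2 := fun h => hcov x (Or.inr (Or.inr hxl)) (h ▸ hw2'.1)
  have hyw2 : y ≠ w2 := fun h => hcov y (Or.inr (Or.inr hyl)) (h ▸ hw2'.1)
  refine aug_pairs (G := G) hM hmax {e, f, l}
    (Finset.insert_subset_iff.2 ⟨he, Finset.insert_subset_iff.2 ⟨hf, by simpa using hl⟩⟩)
    {(a,w1), (c,w2), (b,x), (d,y)} ?_ ?_ ?_ ?_
  · intro p hp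
    simp only [Finset.mem_insert, Finset.mem_singleton] at hp
    rcases hp with rfl | rfl | rfl | rfl
    · exact hw1'.2
    · exact hw2'.2
    · exact hadjbx
    · exact hadjdy
  · intro p hp z hz
    simp only [Finset.mem_insert, Finset.mem_singleton] at hp
    rcases hp with rfl | rfl | rfl | rfl <;> rcases hz with rfl | rfl
    · exact Or.inl ⟨e, by simp, hae⟩
    · exact Or.inr hw1'.1
    · exact Or.inl ⟨f, by simp, hcf⟩
    · exact Or.inr hw2'.1
    · exact Or.inl ⟨e, by simp, hbe⟩
    · exact Or.inl ⟨l, by simp, hxl⟩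
    · exact Or.inl ⟨f, by simp, hdf⟩
    · exact Or.inl ⟨l, by simp, hyl⟩
  · intro p hp q hq hne z hzp hzq
    simp only [Finset.mem_insert, Finset.mem_singleton] at hp hq
    rcases hp with rfl | rfl | rfl | rfl <;> rcases hq with rfl | rfl | rfl | rfl <;>
      first
      | exact hne rfl
      | (rcases hzp with rfl | rfl <;> rcases hzq with h | h <;>
          first
          | exact absurd h (by assumption)
          | exact absurd h.symm (by assumption))
  · have n1 : ((a,w1) : V × V) ∉ ({(c,w2), (b,x), (d,y)} : Finset (V × V)) := by
      simp only [Finset.mem_insert, Finset.mem_singleton, Prod.mk.injEq, not_or]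
      exact ⟨fun h => absurd h.1 hac, fun h => absurd h.1 h1, fun h => absurd h.1 had⟩
    have n2 : ((c,w2) : V × V) ∉ ({(b,x), (d,y)} : Finset (V × V)) := by
      simp only [Finset.mem_insert, Finset.mem_singleton, Prod.mk.injEq, not_or]
      exact ⟨fun h => absurd h.1 hbc.symm, fun h => absurd h.1 h2⟩
    have n3 : ((b,x) : V × V) ∉ ({(d,y)} : Finset (V × V)) := by
      simp only [Finset.mem_singleton, Prod.mk.injEq]
      exact fun h => absurd h.1 hbd
    have hL : ({(a,w1), (c,w2), (b,x), (d,y)} : Finset (V × V)).card = 4 := by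
      rw [Finset.card_insert_of_notMem n1, Finset.card_insert_of_notMem n2,
        Finset.card_insert_of_notMem n3, Finset.card_singleton]
    rw [hL]
    have q1 := Finset.card_insert_le f ({l} : Finset (Sym2 V))
    have q2 := Finset.card_insert_le e ({f, l} : Finset (Sym2 V))
    have q3 : ({l} : Finset (Sym2 V)).card = 1 := Finset.card_singleton l
    omega

end Aug

section Struct
variable {V : Type*} [Fintype V] [DecidableEq V] {G : SimpleGraph V} [DecidableRel G.Adj]

noncomputable def xE (e : Sym2 V) : V := e.out.1
noncomputable def yE (e : Sym2 V) : V := e.out.2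

lemma mk_xE_yE (e : Sym2 V) : s(xE e, yE e) = e := by
  show Sym2.mk e.out.1 e.out.2 = e
  rw [Sym2.mk, Prod.mk.eta, e.out_eq]

noncomputable def aE (G : SimpleGraph V) [DecidableRel G.Adj] (M : Finset (Sym2 V))
    (e : Sym2 V) : V :=
  if 2 ≤ (NW G M (xE e)).card then xE e else yE e

noncomputable def bE (G : SimpleGraph V) [DecidableRel G.Adj] (M : Finset (Sym2 V))
    (e : Sym2 V) : V :=
  if 2 ≤ (NW G M (xE e)).card then yE e else xE e

variable {M : Finset (Sym2 V)}

lemma mk_aE_bE (e : Sym2 V) : s(aE G M e, bE G M e) = e := by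
  unfold aE bE
  split
  · exact mk_xE_yE e
  · rw [Sym2.eq_swap]; exact mk_xE_yE e

lemma aE_mem (e : Sym2 V) : aE G M e ∈ e := by
  have h := Sym2.mem_mk_left (aE G M e) (bE G M e)
  rwa [mk_aE_bE] at h

lemma bE_mem (e : Sym2 V) : bE G M e ∈ e := by
  have h := Sym2.mem_mk_right (aE G M e) (bE G M e)
  rwa [mk_aE_bE] at h

/-- the type-A edges -/
noncomputable def AS (G : SimpleGraph V) [DecidableRel G.Adj] (M : Finset (Sym2 V)) :
    Finset (Sym2 V) :=
  M.filter (fun e => 2 ≤ (NW G M (aE G M e)).card)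

lemma AS_subset : AS G M ⊆ M := Finset.filter_subset _ _

lemma A_outer {e : Sym2 V} (he : e ∈ AS G M) : 2 ≤ (NW G M (aE G M e)).card :=
  (Finset.mem_filter.1 he).2

lemma notA {e : Sym2 V} (he : e ∈ M) (hne : e ∉ AS G M) :
    (NW G M (aE G M e)).card ≤ 1 ∧ (NW G M (bE G M e)).card ≤ 1 := by
  have h1 : ¬ 2 ≤ (NW G M (aE G M e)).card := fun h => hne (Finset.mem_filter.2 ⟨he, h⟩)
  unfold aE bE at *
  by_cases hc : 2 ≤ (NW G M (xE e)).card
  · simp only [if_pos hc] at h1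
    exact absurd hc h1
  · simp only [if_neg hc] at h1 ⊢
    omega

variable (hM : IsMatchingFinset G M)
  (hmax : ∀ M' : Finset (Sym2 V), IsMatchingFinset G M' → M'.card ≤ M.card)
include hM hmax

lemma A_inner {e : Sym2 V} (he : e ∈ AS G M) : NW G M (bE G M e) = ∅ := by
  by_contra h
  obtain ⟨wb, hwb⟩ := Finset.nonempty_iff_ne_empty.2 h
  exact augA hM hmax (AS_subset he) (mk_aE_bE e) (A_outer he) hwb

end Struct

section Count
variable {V : Type*} [Fintype V] [DecidableEq V] {G : SimpleGraph V} [DecidableRel G.Adj]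
  {M : Finset (Sym2 V)}

noncomputable def AApair (G : SimpleGraph V) [DecidableRel G.Adj] (M : Finset (Sym2 V))
    (e f : Sym2 V) : Finset (Sym2 V) :=
  if e = f then ∅ else
    {s(aE G M e, aE G M f), s(aE G M e, bE G M f), s(bE G M e, aE G M f)}

lemma AApair_symm (G : SimpleGraph V) [DecidableRel G.Adj] (M : Finset (Sym2 V))
    (e f : Sym2 V) : AApair G M e f = AApair G M f e := by
  unfold AApair
  rcases eq_or_ne e f with rfl | h
  · rfl
  · rw [if_neg h, if_neg h.symm]
    ext z
    simp only [Finset.mem_insert, Finset.mem_singleton]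
    constructor <;> rintro (rfl | rfl | rfl)
    · exact Or.inl Sym2.eq_swap
    · exact Or.inr (Or.inr Sym2.eq_swap)
    · exact Or.inr (Or.inl Sym2.eq_swap)
    · exact Or.inl Sym2.eq_swap
    · exact Or.inr (Or.inr Sym2.eq_swap)
    · exact Or.inr (Or.inl Sym2.eq_swap)

noncomputable def AA2 (G : SimpleGraph V) [DecidableRel G.Adj] (M : Finset (Sym2 V)) :
    Sym2 (Sym2 V) → Finset (Sym2 V) :=
  Sym2.lift ⟨AApair G M, AApair_symm G M⟩

lemma AA2_mk (e f : Sym2 V) : AA2 G M s(e, f) = AApair G M e f := Sym2.lift_mk _ _ _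

noncomputable def BBpair (G : SimpleGraph V) [DecidableRel G.Adj] (M : Finset (Sym2 V))
    (e f : Sym2 V) : Finset (Sym2 V) :=
  if e = f then ∅ else
    {s(aE G M e, aE G M f), s(aE G M e, bE G M f), s(bE G M e, aE G M f), s(bE G M e, bE G M f)}

lemma BBpair_symm (G : SimpleGraph V) [DecidableRel G.Adj] (M : Finset (Sym2 V))
    (e f : Sym2 V) : BBpair G M e f = BBpair G M f e := by
  unfold BBpair
  rcases eq_or_ne e f with rfl | h
  · rfl
  · rw [if_neg h, if_neg h.symm]
    ext z
    simp only [Finset.mem_insert, Finset.mem_singleton]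
    constructor <;> rintro (rfl | rfl | rfl | rfl)
    · exact Or.inl Sym2.eq_swap
    · exact Or.inr (Or.inr (Or.inl Sym2.eq_swap))
    · exact Or.inr (Or.inl Sym2.eq_swap)
    · exact Or.inr (Or.inr (Or.inr Sym2.eq_swap))
    · exact Or.inl Sym2.eq_swap
    · exact Or.inr (Or.inr (Or.inl Sym2.eq_swap))
    · exact Or.inr (Or.inl Sym2.eq_swap)
    · exact Or.inr (Or.inr (Or.inr Sym2.eq_swap))

noncomputable def BB2 (G : SimpleGraph V) [DecidableRel G.Adj] (M : Finset (Sym2 V)) :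
    Sym2 (Sym2 V) → Finset (Sym2 V) :=
  Sym2.lift ⟨BBpair G M, BBpair_symm G M⟩

lemma BB2_mk (e f : Sym2 V) : BB2 G M s(e, f) = BBpair G M e f := Sym2.lift_mk _ _ _

noncomputable def WsA (G : SimpleGraph V) [DecidableRel G.Adj] (M : Finset (Sym2 V))
    (e : Sym2 V) : Finset (Sym2 V) :=
  (NW G M (aE G M e)).image (fun u => s(aE G M e, u))

noncomputable def WsFull (G : SimpleGraph V) [DecidableRel G.Adj] (M : Finset (Sym2 V))
    (l : Sym2 V) : Finset (Sym2 V) :=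
  WsA G M l ∪ (NW G M (bE G M l)).image (fun u => s(bE G M l, u))

noncomputable def Pl (G : SimpleGraph V) [DecidableRel G.Adj] (M : Finset (Sym2 V))
    (l : Sym2 V) : Finset (Sym2 V) :=
  (AS G M).filter (fun i => G.Adj (bE G M i) (aE G M l))

noncomputable def Ql (G : SimpleGraph V) [DecidableRel G.Adj] (M : Finset (Sym2 V))
    (l : Sym2 V) : Finset (Sym2 V) :=
  (AS G M).filter (fun i => G.Adj (bE G M i) (bE G M l))

noncomputable def Sl (G : SimpleGraph V) [DecidableRel G.Adj] (M : Finset (Sym2 V))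
    (l : Sym2 V) : Finset (Sym2 V) :=
  WsFull G M l
    ∪ (AS G M).biUnion (fun i => {s(aE G M i, aE G M l), s(aE G M i, bE G M l)})
    ∪ (Pl G M l).image (fun i => s(bE G M i, aE G M l))
    ∪ (Ql G M l).image (fun i => s(bE G M i, bE G M l))

noncomputable def Big (G : SimpleGraph V) [DecidableRel G.Adj] (M : Finset (Sym2 V)) :
    Finset (Sym2 V) :=
  M ∪ (AS G M).biUnion (WsA G M) ∪ ((AS G M).sym2).biUnion (AA2 G M)
    ∪ ((M \ AS G M).sym2).biUnion (BB2 G M) ∪ (M \ AS G M).biUnion (Sl G M)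

lemma mem_Big_of_M {f : Sym2 V} (h : f ∈ M) : f ∈ Big G M := by
  unfold Big; exact Finset.mem_union_left _ (Finset.mem_union_left _
    (Finset.mem_union_left _ (Finset.mem_union_left _ h)))

lemma mem_Big_of_WsA {f e : Sym2 V} (he : e ∈ AS G M) (h : f ∈ WsA G M e) : f ∈ Big G M := by
  unfold Big
  exact Finset.mem_union_left _ (Finset.mem_union_left _ (Finset.mem_union_left _
    (Finset.mem_union_right _ (Finset.mem_biUnion.2 ⟨e, he, h⟩))))

lemma mem_Big_of_AA {f e e' : Sym2 V} (he : e ∈ AS G M) (he' : e' ∈ AS G M)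
    (h : f ∈ AApair G M e e') : f ∈ Big G M := by
  unfold Big
  refine Finset.mem_union_left _ (Finset.mem_union_left _ (Finset.mem_union_right _ ?_))
  exact Finset.mem_biUnion.2 ⟨s(e, e'), Finset.mk_mem_sym2_iff.2 ⟨he, he'⟩, by rwa [AA2_mk]⟩

lemma mem_Big_of_BB {f e e' : Sym2 V} (he : e ∈ M \ AS G M) (he' : e' ∈ M \ AS G M)
    (h : f ∈ BBpair G M e e') : f ∈ Big G M := by
  unfold Big
  refine Finset.mem_union_left _ (Finset.mem_union_right _ ?_)
  exact Finset.mem_biUnion.2 ⟨s(e, e'), Finset.mk_mem_sym2_iff.2 ⟨he, he'⟩, by rwa [BB2_mk]⟩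

lemma mem_Big_of_Sl {f l : Sym2 V} (hl : l ∈ M \ AS G M) (h : f ∈ Sl G M l) : f ∈ Big G M := by
  unfold Big
  exact Finset.mem_union_right _ (Finset.mem_biUnion.2 ⟨l, hl, h⟩)

lemma mem_e_cases {e : Sym2 V} {v : V} (hv : v ∈ e) :
    v = aE G M e ∨ v = bE G M e := by
  conv at hv => rw [← mk_aE_bE (G := G) (M := M) e]
  rwa [Sym2.mem_iff] at hv

variable (hM : IsMatchingFinset G M)
  (hmax : ∀ M' : Finset (Sym2 V), IsMatchingFinset G M' → M'.card ≤ M.card)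
include hM hmax

lemma W_edge_mem {u x : V} {e : Sym2 V} (hu : u ∈ mW G M) (he : e ∈ M) (hx : x ∈ e)
    (hadj : G.Adj x u) : s(x, u) ∈ Big G M := by
  have hu' : u ∈ NW G M x := mem_NW.2 ⟨hu, hadj⟩
  by_cases hA : e ∈ AS G M
  · rcases mem_e_cases (G := G) (M := M) hx with h | h
    · subst h
      exact mem_Big_of_WsA hA (Finset.mem_image.2 ⟨u, hu', rfl⟩)
    · subst h
      rw [A_inner hM hmax hA] at hu'
      exact absurd hu' (Finset.notMem_empty u)
  · refine mem_Big_of_Sl (Finset.mem_sdiff.2 ⟨he, hA⟩) ?_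
    unfold Sl WsFull
    rcases mem_e_cases (G := G) (M := M) hx with h | h <;> subst h
    · refine Finset.mem_union_left _ (Finset.mem_union_left _ (Finset.mem_union_left _ ?_))
      unfold WsA
      exact Finset.mem_union_left _ (Finset.mem_image.2 ⟨u, hu', rfl⟩)
    · refine Finset.mem_union_left _ (Finset.mem_union_left _ (Finset.mem_union_left _ ?_))
      exact Finset.mem_union_right _ (Finset.mem_image.2 ⟨u, hu', rfl⟩)

lemma cross_AA {e e' : Sym2 V} {u v : V} (he : e ∈ AS G M) (he' : e' ∈ AS G M)
    (hne : e ≠ e') (hu : u ∈ e) (hv : v ∈ e') (hadj : G.Adj u v) : s(u, v) ∈ Big G M := by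
  have hslots : AApair G M e e' =
      {s(aE G M e, aE G M e'), s(aE G M e, bE G M e'), s(bE G M e, aE G M e')} := if_neg hne
  rcases mem_e_cases (G := G) (M := M) hu with h | h <;> rcases mem_e_cases (G := G) (M := M) hv with h' | h' <;>
    subst h <;> subst h'
  · exact mem_Big_of_AA he he' (hslots ▸ Finset.mem_insert_self _ _)
  · exact mem_Big_of_AA he he'
      (hslots ▸ Finset.mem_insert.2 (Or.inr (Finset.mem_insert_self _ _)))
  · exact mem_Big_of_AA he he' (hslots ▸ Finset.mem_insert.2 (Or.inr
      (Finset.mem_insert.2 (Or.inr (Finset.mem_singleton_self _)))))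
  · exfalso
    refine augB hM hmax (AS_subset he) (mk_aE_bE e) (A_outer he) (AS_subset he') hne.symm
      (show s(bE G M e', aE G M e') = e' by rw [Sym2.eq_swap]; exact mk_aE_bE e') ?_ hadj
    exact Finset.card_pos.1 (lt_of_lt_of_le two_pos (A_outer he'))

lemma cross_AB {e l : Sym2 V} {u v : V} (he : e ∈ AS G M) (hl : l ∈ M \ AS G M)
    (hu : u ∈ e) (hv : v ∈ l) (hadj : G.Adj u v) : s(u, v) ∈ Big G M := by
  refine mem_Big_of_Sl hl ?_
  unfold Sl
  rcases mem_e_cases (G := G) (M := M) hu with h | h <;> rcases mem_e_cases (G := G) (M := M) hv with h' | h' <;>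
    subst h <;> subst h'
  · exact Finset.mem_union_left _ (Finset.mem_union_left _ (Finset.mem_union_right _
      (Finset.mem_biUnion.2 ⟨e, he, Finset.mem_insert_self _ _⟩)))
  · exact Finset.mem_union_left _ (Finset.mem_union_left _ (Finset.mem_union_right _
      (Finset.mem_biUnion.2 ⟨e, he, Finset.mem_insert.2 (Or.inr (Finset.mem_singleton_self _))⟩)))
  · refine Finset.mem_union_left _ (Finset.mem_union_right _ ?_)
    exact Finset.mem_image.2 ⟨e, Finset.mem_filter.2 ⟨he, hadj⟩, rfl⟩
  · refine Finset.mem_union_right _ ?_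
    exact Finset.mem_image.2 ⟨e, Finset.mem_filter.2 ⟨he, hadj⟩, rfl⟩

lemma cross_BB {l l' : Sym2 V} {u v : V} (hl : l ∈ M \ AS G M) (hl' : l' ∈ M \ AS G M)
    (hne : l ≠ l') (hu : u ∈ l) (hv : v ∈ l') (hadj : G.Adj u v) : s(u, v) ∈ Big G M := by
  have hslots : BBpair G M l l' = {s(aE G M l, aE G M l'), s(aE G M l, bE G M l'),
      s(bE G M l, aE G M l'), s(bE G M l, bE G M l')} := if_neg hne
  refine mem_Big_of_BB hl hl' (hslots ▸ ?_)
  rcases mem_e_cases (G := G) (M := M) hu with h | h <;> rcases mem_e_cases (G := G) (M := M) hv with h' | h' <;>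
      subst h <;> subst h' <;> simp

lemma edgeFinset_subset_Big : G.edgeFinset ⊆ Big G M := by
  intro f hf
  induction f with
  | _ u v =>
    have hadj : G.Adj u v := by rwa [SimpleGraph.mem_edgeFinset, SimpleGraph.mem_edgeSet] at hf
    by_cases hu : u ∈ mW G M <;> by_cases hv : v ∈ mW G M
    · exact absurd hadj (W_indep hM hmax hu hv)
    · have : ¬ ∀ e ∈ M, v ∉ e := fun h => hv (mem_mW.2 h)
      push_neg at this
      obtain ⟨e, he, hve⟩ := this
      rw [Sym2.eq_swap]
      exact W_edge_mem hM hmax hu he hve hadj.symm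
    · have : ¬ ∀ e ∈ M, u ∉ e := fun h => hu (mem_mW.2 h)
      push_neg at this
      obtain ⟨e, he, hue⟩ := this
      exact W_edge_mem hM hmax hv he hue hadj
    · have h1 : ¬ ∀ e ∈ M, u ∉ e := fun h => hu (mem_mW.2 h)
      have h2 : ¬ ∀ e ∈ M, v ∉ e := fun h => hv (mem_mW.2 h)
      push_neg at h1 h2
      obtain ⟨e, he, hue⟩ := h1
      obtain ⟨e', he', hve⟩ := h2
      rcases eq_or_ne e e' with rfl | hne
      · have : e = s(u, v) := sym2_eq_of_mem hue hve hadj.ne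
        exact mem_Big_of_M (this ▸ he)
      · by_cases hA : e ∈ AS G M <;> by_cases hA' : e' ∈ AS G M
        · exact cross_AA hM hmax hA hA' hne hue hve hadj
        · exact cross_AB hM hmax hA (Finset.mem_sdiff.2 ⟨he', hA'⟩) hue hve hadj
        · rw [Sym2.eq_swap]
          exact cross_AB hM hmax hA' (Finset.mem_sdiff.2 ⟨he, hA⟩) hve hue hadj.symm
        · exact cross_BB hM hmax (Finset.mem_sdiff.2 ⟨he, hA⟩) (Finset.mem_sdiff.2 ⟨he', hA'⟩)
            hne hue hve hadj

end Count
section Cards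
variable {V : Type*} [Fintype V] [DecidableEq V] {G : SimpleGraph V} [DecidableRel G.Adj]
  {M : Finset (Sym2 V)}

lemma twice_choose (n : ℕ) : 2 * Nat.choose n 2 = n * (n - 1) := by
  induction n with
  | zero => rfl
  | succ p ih =>
    rw [Nat.choose_succ_succ, Nat.mul_add, ih, Nat.choose_one_right]
    rcases Nat.eq_zero_or_pos p with rfl | hp
    · rfl
    · have h1 : p + 1 - 1 = p := rfl
      rw [h1]
      cases p with
      | zero => omega
      | succ q =>
        have h2 : q + 1 - 1 = q := rfl
        rw [h2]
        ring

lemma card_sym2_nondiag {α : Type*} [DecidableEq α] (s : Finset α) :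
    ((s.sym2).filter (fun t => ¬ t.IsDiag)).card = Nat.choose s.card 2 := by
  have hdiag : (s.sym2).filter (fun t => t.IsDiag) = s.image Sym2.diag := by
    ext t
    simp only [Finset.mem_filter, Finset.mem_image, Finset.mem_sym2_iff]
    constructor
    · rintro ⟨hmem, hdiag⟩
      induction t with
      | _ x y =>
        rw [Sym2.mk_isDiag_iff] at hdiag
        subst hdiag
        exact ⟨x, hmem x (Sym2.mem_mk_left x x), rfl⟩
    · rintro ⟨a, ha, rfl⟩
      constructor
      · intro z hz
        rw [Sym2.diag, Sym2.mem_iff] at hz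
        rcases hz with rfl | rfl <;> exact ha
      · exact Sym2.diag_isDiag a
  have hcard1 : ((s.sym2).filter (fun t => t.IsDiag)).card = s.card := by
    rw [hdiag, Finset.card_image_of_injective _ Sym2.diag_injective]
  have hcard2 : ((s.sym2).filter (fun t => t.IsDiag)).card
      + ((s.sym2).filter (fun t => ¬ t.IsDiag)).card = (s.sym2).card := by
    simpa using Finset.card_filter_add_card_filter_not
      (s := s.sym2) (p := fun t => t.IsDiag)
  have hcard3 : (s.sym2).card = Nat.choose (s.card + 1) 2 := Finset.card_sym2 s
  have hch : Nat.choose (s.card + 1) 2 = s.card + Nat.choose s.card 2 := by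
    rw [Nat.choose_succ_succ, Nat.choose_one_right]
  omega

variable (hM : IsMatchingFinset G M)
  (hmax : ∀ M' : Finset (Sym2 V), IsMatchingFinset G M' → M'.card ≤ M.card)
include hM hmax

lemma Pl_empty {l : Sym2 V} (hl : l ∈ M \ AS G M) (hNW : (NW G M (bE G M l)).Nonempty) :
    Pl G M l = ∅ := by
  rw [Finset.eq_empty_iff_forall_notMem]
  intro i hi
  rw [Pl, Finset.mem_filter] at hi
  obtain ⟨hiA, hadj⟩ := hi
  have hlM := (Finset.mem_sdiff.1 hl).1
  have hlne : l ≠ i := fun h => (Finset.mem_sdiff.1 hl).2 (h ▸ hiA)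
  exact augB hM hmax (AS_subset hiA) (mk_aE_bE i) (A_outer hiA) hlM hlne
    (mk_aE_bE l) hNW hadj

lemma Ql_empty {l : Sym2 V} (hl : l ∈ M \ AS G M) (hNW : (NW G M (aE G M l)).Nonempty) :
    Ql G M l = ∅ := by
  rw [Finset.eq_empty_iff_forall_notMem]
  intro i hi
  rw [Ql, Finset.mem_filter] at hi
  obtain ⟨hiA, hadj⟩ := hi
  have hlM := (Finset.mem_sdiff.1 hl).1
  have hlne : l ≠ i := fun h => (Finset.mem_sdiff.1 hl).2 (h ▸ hiA)
  exact augB hM hmax (AS_subset hiA) (mk_aE_bE i) (A_outer hiA) hlM hlne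
    (show s(bE G M l, aE G M l) = l by rw [Sym2.eq_swap]; exact mk_aE_bE l) hNW hadj

lemma PQ_bound {l : Sym2 V} (hl : l ∈ M \ AS G M) (hA : ¬ (NW G M (aE G M l)).Nonempty)
    (hB : ¬ (NW G M (bE G M l)).Nonempty) :
    (Pl G M l).card + (Ql G M l).card ≤ (AS G M).card + 1 := by
  have hPsub : Pl G M l ⊆ AS G M := Finset.filter_subset _ _
  have hQsub : Ql G M l ⊆ AS G M := Finset.filter_subset _ _
  by_cases hQ : (Ql G M l).Nonempty
  · obtain ⟨j, hj⟩ := hQ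
    have hjA := (Finset.mem_filter.1 hj).1
    have hjadj := (Finset.mem_filter.1 hj).2
    have hPsub1 : Pl G M l ⊆ {j} := by
      intro i hi
      rw [Finset.mem_singleton]
      by_contra hij
      obtain ⟨hiA, hiadj⟩ := Finset.mem_filter.1 hi
      have hlM := (Finset.mem_sdiff.1 hl).1
      have hli : l ≠ i := fun h => (Finset.mem_sdiff.1 hl).2 (h ▸ hiA)
      have hlj : l ≠ j := fun h => (Finset.mem_sdiff.1 hl).2 (h ▸ hjA)
      exact augC hM hmax (AS_subset hiA) (mk_aE_bE i) (A_outer hiA) (AS_subset hjA)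
        (mk_aE_bE j) (A_outer hjA) hij hlM hli hlj (mk_aE_bE l) hiadj hjadj
    have h1 : (Pl G M l).card ≤ 1 := by
      calc (Pl G M l).card ≤ ({j} : Finset (Sym2 V)).card := Finset.card_le_card hPsub1
      _ = 1 := Finset.card_singleton j
    have h2 : (Ql G M l).card ≤ (AS G M).card := Finset.card_le_card hQsub
    omega
  · rw [Finset.not_nonempty_iff_eq_empty.1 hQ]
    have h1 : (Pl G M l).card ≤ (AS G M).card := Finset.card_le_card hPsub
    simp only [Finset.card_empty]
    omega

lemma Sl_card {l : Sym2 V} (hl : l ∈ M \ AS G M) :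
    ((AS G M).card = 0 → (Sl G M l).card ≤ 2) ∧
      (1 ≤ (AS G M).card → (Sl G M l).card ≤ 3 * (AS G M).card + 1) := by
  have hlM := (Finset.mem_sdiff.1 hl).1
  have hlA := (Finset.mem_sdiff.1 hl).2
  have hnotA := notA (G := G) hlM hlA
  set k := (AS G M).card with hk
  have hbase : (Sl G M l).card ≤ (NW G M (aE G M l)).card + (NW G M (bE G M l)).card
      + 2 * k + (Pl G M l).card + (Ql G M l).card := by
    have h1 : (Sl G M l).card ≤ (WsFull G M l).card
        + ((AS G M).biUnion (fun i => {s(aE G M i, aE G M l), s(aE G M i, bE G M l)})).card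
        + ((Pl G M l).image (fun i => s(bE G M i, aE G M l))).card
        + ((Ql G M l).image (fun i => s(bE G M i, bE G M l))).card := by
      unfold Sl
      calc _ ≤ _ := Finset.card_union_le _ _
      _ ≤ _ := by
        gcongr ?_ + _
        calc _ ≤ _ := Finset.card_union_le _ _
        _ ≤ _ := by
          gcongr ?_ + _
          exact Finset.card_union_le _ _
    have h2 : (WsFull G M l).card ≤ (NW G M (aE G M l)).card + (NW G M (bE G M l)).card := by
      unfold WsFull WsA
      calc _ ≤ _ := Finset.card_union_le _ _
      _ ≤ _ := by gcongr <;> exact Finset.card_image_le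
    have h3 : ((AS G M).biUnion
        (fun i => {s(aE G M i, aE G M l), s(aE G M i, bE G M l)})).card ≤ 2 * k := by
      have := Finset.card_biUnion_le_card_mul (AS G M)
        (fun i => ({s(aE G M i, aE G M l), s(aE G M i, bE G M l)} : Finset (Sym2 V))) 2
        (fun i _ => le_trans (Finset.card_insert_le _ _) (by simp))
      omega
    have h4 := Finset.card_image_le (s := Pl G M l) (f := fun i => s(bE G M i, aE G M l))
    have h5 := Finset.card_image_le (s := Ql G M l) (f := fun i => s(bE G M i, bE G M l))
    omega
  constructor
  · intro hk0
    have hP : (Pl G M l).card = 0 := by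
      have := Finset.card_le_card (Finset.filter_subset
        (fun i => G.Adj (bE G M i) (aE G M l)) (AS G M))
      unfold Pl; omega
    have hQ : (Ql G M l).card = 0 := by
      have := Finset.card_le_card (Finset.filter_subset
        (fun i => G.Adj (bE G M i) (bE G M l)) (AS G M))
      unfold Ql; omega
    omega
  · intro hk1
    by_cases hA : (NW G M (aE G M l)).Nonempty <;> by_cases hB : (NW G M (bE G M l)).Nonempty
    · have hP := Pl_empty hM hmax hl hB
      have hQ := Ql_empty hM hmax hl hA
      rw [hP, hQ] at hbase
      simp only [Finset.card_empty] at hbase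
      omega
    · have hQ := Ql_empty hM hmax hl hA
      have hBc : (NW G M (bE G M l)).card = 0 := by
        rw [Finset.not_nonempty_iff_eq_empty.1 hB, Finset.card_empty]
      have hPc : (Pl G M l).card ≤ k := Finset.card_le_card (Finset.filter_subset _ _)
      rw [hQ] at hbase
      simp only [Finset.card_empty] at hbase
      omega
    · have hP := Pl_empty hM hmax hl hB
      have hAc : (NW G M (aE G M l)).card = 0 := by
        rw [Finset.not_nonempty_iff_eq_empty.1 hA, Finset.card_empty]
      have hQc : (Ql G M l).card ≤ k := Finset.card_le_card (Finset.filter_subset _ _)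
      rw [hP] at hbase
      simp only [Finset.card_empty] at hbase
      omega
    · have hPQ := PQ_bound hM hmax hl hA hB
      have hAc : (NW G M (aE G M l)).card = 0 := by
        rw [Finset.not_nonempty_iff_eq_empty.1 hA, Finset.card_empty]
      have hBc : (NW G M (bE G M l)).card = 0 := by
        rw [Finset.not_nonempty_iff_eq_empty.1 hB, Finset.card_empty]
      omega

end Cards
section Cards2
variable {V : Type*} [Fintype V] [DecidableEq V] {G : SimpleGraph V} [DecidableRel G.Adj]
  {M : Finset (Sym2 V)}

lemma card_le_three (x y z : Sym2 V) : ({x, y, z} : Finset (Sym2 V)).card ≤ 3 := by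
  apply le_trans (Finset.card_insert_le _ _)
  have h := Finset.card_insert_le y ({z} : Finset (Sym2 V))
  simp only [Finset.card_singleton] at h
  omega

lemma card_le_four (x y z t : Sym2 V) : ({x, y, z, t} : Finset (Sym2 V)).card ≤ 4 := by
  apply le_trans (Finset.card_insert_le _ _)
  have h := card_le_three y z t
  omega

lemma AA2_card_le {t : Sym2 (Sym2 V)} (h : ¬ t.IsDiag) : (AA2 G M t).card ≤ 3 := by
  induction t with
  | _ e f =>
    rw [AA2_mk, AApair, if_neg (by rwa [Sym2.mk_isDiag_iff] at h)]
    exact card_le_three _ _ _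

lemma AA2_diag_card {t : Sym2 (Sym2 V)} (h : t.IsDiag) : (AA2 G M t).card = 0 := by
  induction t with
  | _ e f =>
    rw [Sym2.mk_isDiag_iff] at h
    rw [AA2_mk, AApair, if_pos h, Finset.card_empty]

lemma BB2_card_le {t : Sym2 (Sym2 V)} (h : ¬ t.IsDiag) : (BB2 G M t).card ≤ 4 := by
  induction t with
  | _ e f =>
    rw [BB2_mk, BBpair, if_neg (by rwa [Sym2.mk_isDiag_iff] at h)]
    exact card_le_four _ _ _ _

lemma BB2_diag_card {t : Sym2 (Sym2 V)} (h : t.IsDiag) : (BB2 G M t).card = 0 := by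
  induction t with
  | _ e f =>
    rw [Sym2.mk_isDiag_iff] at h
    rw [BB2_mk, BBpair, if_pos h, Finset.card_empty]

lemma sym2_biUnion_card (s : Finset (Sym2 V)) (F : Sym2 (Sym2 V) → Finset (Sym2 V)) (c : ℕ)
    (h0 : ∀ t, t.IsDiag → (F t).card = 0) (hc : ∀ t, ¬ t.IsDiag → (F t).card ≤ c) :
    ((s.sym2).biUnion F).card ≤ c * Nat.choose s.card 2 := by
  classical
  have ha : ∑ t ∈ (s.sym2).filter (fun t => t.IsDiag), (F t).card = 0 :=
    Finset.sum_eq_zero (fun t ht => h0 t (Finset.mem_filter.1 ht).2)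
  have hb : ∑ t ∈ (s.sym2).filter (fun t => ¬ t.IsDiag), (F t).card
      ≤ ((s.sym2).filter (fun t => ¬ t.IsDiag)).card * c := by
    have := Finset.sum_le_card_nsmul ((s.sym2).filter (fun t => ¬ t.IsDiag))
      (fun t => (F t).card) c (fun t ht => hc t (Finset.mem_filter.1 ht).2)
    simpa [smul_eq_mul] using this
  calc ((s.sym2).biUnion F).card ≤ ∑ t ∈ s.sym2, (F t).card := Finset.card_biUnion_le
  _ = ∑ t ∈ (s.sym2).filter (fun t => t.IsDiag), (F t).card
      + ∑ t ∈ (s.sym2).filter (fun t => ¬ t.IsDiag), (F t).card :=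
    (Finset.sum_filter_add_sum_filter_not _ _ _).symm
  _ ≤ c * Nat.choose s.card 2 := by
    rw [ha, Nat.zero_add]
    exact hb.trans (le_of_eq (by rw [card_sym2_nondiag, Nat.mul_comm]))

lemma Big_card_le :
    (Big G M).card ≤ M.card + (AS G M).card * (mW G M).card
      + 3 * Nat.choose (AS G M).card 2 + 4 * Nat.choose (M \ AS G M).card 2
      + ∑ l ∈ M \ AS G M, (Sl G M l).card := by
  have hWsA : ∀ e ∈ AS G M, (WsA G M e).card ≤ (mW G M).card := by
    intro e _
    calc (WsA G M e).card ≤ (NW G M (aE G M e)).card := Finset.card_image_le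
    _ ≤ (mW G M).card := Finset.card_le_card (Finset.filter_subset _ _)
  have h1 : ((AS G M).biUnion (WsA G M)).card ≤ (AS G M).card * (mW G M).card :=
    Finset.card_biUnion_le_card_mul _ _ _ hWsA
  have h2 : (((AS G M).sym2).biUnion (AA2 G M)).card ≤ 3 * Nat.choose (AS G M).card 2 :=
    sym2_biUnion_card _ _ _ (fun t ht => AA2_diag_card ht) (fun t ht => AA2_card_le ht)
  have h3 : (((M \ AS G M).sym2).biUnion (BB2 G M)).card
      ≤ 4 * Nat.choose (M \ AS G M).card 2 :=
    sym2_biUnion_card _ _ _ (fun t ht => BB2_diag_card ht) (fun t ht => BB2_card_le ht)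
  have h4 : ((M \ AS G M).biUnion (Sl G M)).card ≤ ∑ l ∈ M \ AS G M, (Sl G M l).card :=
    Finset.card_biUnion_le
  unfold Big
  have u1 := le_trans (Finset.card_union_le M ((AS G M).biUnion (WsA G M)))
    (Nat.add_le_add_left h1 M.card)
  have u2 := le_trans (Finset.card_union_le
      (M ∪ (AS G M).biUnion (WsA G M)) (((AS G M).sym2).biUnion (AA2 G M)))
    (Nat.add_le_add u1 h2)
  have u3 := le_trans (Finset.card_union_le
      (M ∪ (AS G M).biUnion (WsA G M) ∪ ((AS G M).sym2).biUnion (AA2 G M))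
      (((M \ AS G M).sym2).biUnion (BB2 G M)))
    (Nat.add_le_add u2 h3)
  exact le_trans (Finset.card_union_le _ _) (Nat.add_le_add u3 h4)

variable (hM : IsMatchingFinset G M)
include hM

lemma cover_count : (mW G M).card + 2 * M.card = Fintype.card V := by
  classical
  set U : Finset V := M.biUnion (fun e => {aE G M e, bE G M e}) with hU
  have hmWU : mW G M = Finset.univ \ U := by
    ext v
    simp only [mW, Finset.mem_filter, Finset.mem_univ, true_and, Finset.mem_sdiff, hU,
      Finset.mem_biUnion, Finset.mem_insert, Finset.mem_singleton]
    constructor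
    · intro h
      rintro ⟨e, he, rfl | rfl⟩
      · exact h e he (aE_mem e)
      · exact h e he (bE_mem e)
    · intro h e he hv
      rcases mem_e_cases (G := G) (M := M) hv with h' | h'
      · exact h ⟨e, he, Or.inl h'⟩
      · exact h ⟨e, he, Or.inr h'⟩
  have hUcard : U.card = 2 * M.card := by
    rw [hU, Finset.card_biUnion]
    · have : ∀ e ∈ M, ({aE G M e, bE G M e} : Finset V).card = 2 := by
        intro e he
        rw [Finset.card_insert_of_notMem (by
          simp only [Finset.mem_singleton]
          exact ne_endpoints hM he (mk_aE_bE e)), Finset.card_singleton]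
      rw [Finset.sum_congr rfl this, Finset.sum_const, smul_eq_mul]
      omega
    · intro e he f hf hef
      rw [Function.onFun, Finset.disjoint_left]
      intro v hv hv'
      simp only [Finset.mem_insert, Finset.mem_singleton] at hv hv'
      have hve : v ∈ e := by
        rcases hv with rfl | rfl
        exacts [aE_mem e, bE_mem e]
      have hvf : v ∈ f := by
        rcases hv' with rfl | rfl
        exacts [aE_mem f, bE_mem f]
      exact hef (cover_eq hM he hf hve hvf)
  have hsub : U ⊆ Finset.univ := Finset.subset_univ U
  have := Finset.card_sdiff_of_subset hsub
  rw [hmWU, this, Finset.card_univ, hUcard]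
  have := Finset.card_le_card hsub
  rw [Finset.card_univ] at this
  omega

lemma w_ge_two (hk : 1 ≤ (AS G M).card) : 2 ≤ (mW G M).card := by
  obtain ⟨i, hi⟩ := Finset.card_pos.1 hk
  calc 2 ≤ (NW G M (aE G M i)).card := A_outer hi
  _ ≤ (mW G M).card := Finset.card_le_card (Finset.filter_subset _ _)

variable (hmax : ∀ M' : Finset (Sym2 V), IsMatchingFinset G M' → M'.card ≤ M.card)
include hmax

lemma indep_bound : (mW G M).card + (AS G M).card ≤ indNum G := by
  classical
  set I : Finset V := mW G M ∪ (AS G M).image (bE G M) with hI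
  have hbni : ∀ i ∈ AS G M, bE G M i ∉ mW G M := fun i hi h =>
    mem_mW.1 h i (AS_subset hi) (bE_mem i)
  have hdisj : Disjoint (mW G M) ((AS G M).image (bE G M)) := by
    rw [Finset.disjoint_right]
    rintro v hv hv'
    obtain ⟨i, hi, rfl⟩ := Finset.mem_image.1 hv
    exact hbni i hi hv'
  have hinj : Set.InjOn (bE G M) ↑(AS G M) := by
    intro i hi j hj hij
    exact cover_eq hM (AS_subset hi) (AS_subset hj) (bE_mem i) (hij ▸ bE_mem j)
  have hIcard : I.card = (mW G M).card + (AS G M).card := by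
    rw [hI, Finset.card_union_of_disjoint hdisj, Finset.card_image_of_injOn hinj]
  have hind : ∀ x ∈ I, ∀ y ∈ I, ¬ G.Adj x y := by
    intro x hx y hy hadj
    rw [hI, Finset.mem_union] at hx hy
    rcases hx with hx | hx <;> rcases hy with hy | hy
    · exact W_indep hM hmax hx hy hadj
    · obtain ⟨j, hj, rfl⟩ := Finset.mem_image.1 hy
      have : x ∈ NW G M (bE G M j) := mem_NW.2 ⟨hx, hadj.symm⟩
      rw [A_inner hM hmax hj] at this
      exact absurd this (Finset.notMem_empty x)
    · obtain ⟨i, hi, rfl⟩ := Finset.mem_image.1 hx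
      have : y ∈ NW G M (bE G M i) := mem_NW.2 ⟨hy, hadj⟩
      rw [A_inner hM hmax hi] at this
      exact absurd this (Finset.notMem_empty y)
    · obtain ⟨i, hi, rfl⟩ := Finset.mem_image.1 hx
      obtain ⟨j, hj, rfl⟩ := Finset.mem_image.1 hy
      rcases eq_or_ne i j with rfl | hij
      · exact G.irrefl hadj
      · exact augB hM hmax (AS_subset hi) (mk_aE_bE i) (A_outer hi) (AS_subset hj)
          (fun h => hij h.symm)
          (show s(bE G M j, aE G M j) = j by rw [Sym2.eq_swap]; exact mk_aE_bE j)
          (Finset.card_pos.1 (lt_of_lt_of_le two_pos (A_outer hj))) hadj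
  calc (mW G M).card + (AS G M).card = I.card := hIcard.symm
  _ ≤ indNum G := card_le_indNum hind

end Cards2
lemma arith_core (p ν m k j w E : ℤ) (hν : 1 ≤ ν) (hp : ν + 2 ≤ p)
    (hm : m ≤ ν) (hkj : k + j = m) (hk0 : 0 ≤ k) (hj0 : 0 ≤ j) (hw0 : 0 ≤ w)
    (hw1 : w + 2*m ≤ p + ν) (hw2 : w + k + 1 ≤ p)
    (hlt : 2*(ν*(2*ν+1)) + 2 ≤ 2*p*ν + ν*(ν-1))
    (hE0 : k = 0 → E ≤ 3*m + 2*(m*(m-1)))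
    (hE1 : 1 ≤ k → 2*E ≤ 2*m + 2*(k*w) + 3*(k*(k-1)) + 4*(j*(j-1)) + 2*(j*(3*k+1))) :
    2*E + 2 ≤ 2*p*ν + ν*(ν-1) := by
  rcases eq_or_lt_of_le hk0 with hk | hk
  · have h := hE0 hk.symm
    nlinarith [mul_nonneg (sub_nonneg.2 hm) (by linarith : (0:ℤ) ≤ ν + m)]
  · have hk1 : 1 ≤ k := hk
    have h := hE1 hk1
    have hp' : 3*ν + 4 ≤ 2*p := by nlinarith
    set r : ℤ := ν - k - j with hr
    have hr0 : 0 ≤ r := by omega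
    rcases eq_or_lt_of_le (by omega : (0:ℤ) ≤ j + r) with hjr | hjr
    · have hj : j = 0 := by omega
      have : k = ν := by omega
      nlinarith [mul_nonneg (by omega : (0:ℤ) ≤ k) (by omega : (0:ℤ) ≤ p - ν - 1 - w)]
    · nlinarith [mul_nonneg (by omega : (0:ℤ) ≤ k) (by omega : (0:ℤ) ≤ p + ν - 2*m - w),
                 mul_nonneg (by omega : (0:ℤ) ≤ 2*p - 3*ν - 4) (by omega : (0:ℤ) ≤ j + r),
                 mul_nonneg (by omega : (0:ℤ) ≤ k - 1) hj0,
                 mul_nonneg (by omega : (0:ℤ) ≤ k - 1) hr0,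
                 mul_nonneg hj0 hr0, mul_nonneg hr0 hr0, hjr]

lemma cast_twice_choose (j : ℕ) : 2 * ((Nat.choose j 2 : ℕ) : ℤ) = (j:ℤ)*((j:ℤ)-1) := by
  have h := twice_choose j
  rcases Nat.eq_zero_or_pos j with rfl | hj
  · simp
  · have hc : ((j - 1 : ℕ) : ℤ) = (j : ℤ) - 1 := by
      push_cast [Nat.cast_sub hj]; ring
    zify at h
    rw [hc] at h
    exact h

lemma zlem1 (C1 C2 p ν : ℤ) (h : C1 + 1 ≤ p*ν + C2) (h1 : 2*C1 = (2*ν+1)*(2*ν))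
    (h2 : 2*C2 = ν*(ν-1)) : 2*(ν*(2*ν+1)) + 2 ≤ 2*p*ν + ν*(ν-1) := by nlinarith

lemma zlem2 (E m j Cj : ℤ) (hjm : j = m) (hE : E ≤ m + 4*Cj + 2*j)
    (htj : 2*Cj = j*(j-1)) : E ≤ 3*m + 2*(m*(m-1)) := by subst hjm; nlinarith [htj, hE]

lemma zlem3 (E m k j w Ck Cj : ℤ) (hE : E ≤ m + k*w + 3*Ck + 4*Cj + j*(3*k+1))
    (htk : 2*Ck = k*(k-1)) (htj : 2*Cj = j*(j-1)) :
    2*E ≤ 2*m + 2*(k*w) + 3*(k*(k-1)) + 4*(j*(j-1)) + 2*(j*(3*k+1)) := by nlinarith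

lemma zlem4 (E p ν C : ℤ) (key : 2*E + 2 ≤ 2*p*ν + ν*(ν-1)) (ht : 2*C = ν*(ν-1)) :
    E < p*ν + C := by nlinarith

set_option maxHeartbeats 1000000 in
/-- Erdős–Gallai refinement: if `|V(G)| ≤ n`, `ν(G) ≤ ν`, `2ν+2 ≤ n`,
`α(G) < n - ν` and `C(2ν+1,2) < (n-ν)ν + C(ν,2)`, then `|E(G)| < (n-ν)ν + C(ν,2)`. -/
theorem edges_lt_of_indepNum_lt (n ν : ℕ) (hn : 0 < n) (hν : 0 < ν)
    {V : Type*} [Fintype V] (G : SimpleGraph V)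
    (hcard : Fintype.card V ≤ n) (hmat : matNum G ≤ ν) (hn2 : 2 * ν + 2 ≤ n)
    (hind : indNum G < n - ν)
    (hlt : (2 * ν + 1).choose 2 < (n - ν) * ν + ν.choose 2) :
    edgeCount G < (n - ν) * ν + ν.choose 2 := by
  classical
  letI : DecidableEq V := Classical.decEq V
  letI : DecidableRel G.Adj := fun _ _ => Classical.propDecidable _
  obtain ⟨M, hM, hMcard⟩ := exists_max_matching G
  have hmax : ∀ M' : Finset (Sym2 V), IsMatchingFinset G M' → M'.card ≤ M.card := by
    intro M' h
    rw [hMcard]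
    exact card_le_matNum h
  set m := M.card with hmdef
  set k := (AS G M).card with hkdef
  set j := (M \ AS G M).card with hjdef
  set w := (mW G M).card with hwdef
  have hkjm : k + j = m := by
    have h1 : j = m - k := by
      rw [hjdef, Finset.card_sdiff_of_subset (AS_subset (G := G) (M := M))]
    have h2 : k ≤ m := Finset.card_le_card (AS_subset (G := G) (M := M))
    omega
  have hmν : m ≤ ν := le_of_eq_of_le hMcard hmat
  have hcover : w + 2 * m = Fintype.card V := cover_count hM
  have hindep : w + k ≤ indNum G := indep_bound hM hmax
  have hw2' : w + k + 1 ≤ n - ν := by omega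
  have hνn : ν ≤ n := by omega
  have hcast : ((n - ν : ℕ) : ℤ) = (n : ℤ) - ν := by
    push_cast [Nat.cast_sub hνn]; ring
  have hEcount : edgeCount G ≤ m + k * w + 3 * Nat.choose k 2 + 4 * Nat.choose j 2
      + ∑ l ∈ M \ AS G M, (Sl G M l).card := by
    rw [edgeCount_eq]
    exact le_trans (Finset.card_le_card (edgeFinset_subset_Big hM hmax)) Big_card_le
  have hS0 : k = 0 → ∑ l ∈ M \ AS G M, (Sl G M l).card ≤ 2 * j := by
    intro h0
    have := Finset.sum_le_card_nsmul (M \ AS G M) (fun l => (Sl G M l).card) 2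
      (fun l hl => (Sl_card hM hmax hl).1 h0)
    rw [smul_eq_mul] at this
    omega
  have hS1 : 1 ≤ k → ∑ l ∈ M \ AS G M, (Sl G M l).card ≤ j * (3 * k + 1) := by
    intro h1
    have := Finset.sum_le_card_nsmul (M \ AS G M) (fun l => (Sl G M l).card) (3 * k + 1)
      (fun l hl => (Sl_card hM hmax hl).2 h1)
    rw [smul_eq_mul, ← hjdef] at this
    exact this
  clear_value m k j w
  have hAw2 : (w : ℤ) + k + 1 ≤ (n : ℤ) - ν := by
    have := hw2'
    zify at this
    rwa [hcast] at this
  have hAlt : 2*((ν:ℤ)*(2*ν+1)) + 2 ≤ 2*((n:ℤ) - ν)*ν + ν*((ν:ℤ)-1) := by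
    have ht1 : 2 * ((Nat.choose (2 * ν + 1) 2 : ℕ) : ℤ)
        = (2*(ν:ℤ)+1)*(2*(ν:ℤ)) := by
      have := cast_twice_choose (2 * ν + 1)
      push_cast at this ⊢
      linarith only [this]
    have ht2 := cast_twice_choose ν
    have hlt' : Nat.choose (2 * ν + 1) 2 + 1 ≤ (n - ν) * ν + Nat.choose ν 2 := hlt
    have hlt'' : ((Nat.choose (2 * ν + 1) 2 : ℕ) : ℤ) + 1
        ≤ ((n:ℤ) - ν) * ν + ((Nat.choose ν 2 : ℕ) : ℤ) := by
      zify at hlt'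
      rwa [hcast] at hlt'
    exact zlem1 _ _ _ _ hlt'' ht1 ht2
  have hAE0 : (k : ℤ) = 0 → (edgeCount G : ℤ) ≤ 3*(m:ℤ) + 2*((m:ℤ)*((m:ℤ)-1)) := by
    intro h0
    have hk0 : k = 0 := by exact_mod_cast h0
    have hjm : j = m := by omega
    have hch : Nat.choose k 2 = 0 := by rw [hk0]; rfl
    have hS := hS0 hk0
    have hE' : edgeCount G ≤ m + 4 * Nat.choose j 2 + 2 * j := by
      have := hEcount
      rw [hch, hk0] at this
      simp only [Nat.zero_mul, Nat.mul_zero, Nat.add_zero] at this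
      omega
    have hE'' : ((edgeCount G : ℕ) : ℤ) ≤ (m:ℤ) + 4 * ((Nat.choose j 2 : ℕ) : ℤ)
        + 2 * (j:ℤ) := by zify at hE'; exact hE'
    exact zlem2 _ _ _ _ (by exact_mod_cast hjm) hE'' (cast_twice_choose j)
  have hAE1 : (1:ℤ) ≤ k → 2*(edgeCount G : ℤ) ≤ 2*(m:ℤ) + 2*((k:ℤ)*w) + 3*((k:ℤ)*((k:ℤ)-1))
      + 4*((j:ℤ)*((j:ℤ)-1)) + 2*((j:ℤ)*(3*(k:ℤ)+1)) := by
    intro h1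
    have hk1 : (1:ℕ) ≤ k := by exact_mod_cast h1
    have hS := hS1 hk1
    have hE' : edgeCount G ≤ m + k * w + 3 * Nat.choose k 2 + 4 * Nat.choose j 2
        + j * (3 * k + 1) := by omega
    have hE'' : ((edgeCount G : ℕ) : ℤ) ≤ (m:ℤ) + (k:ℤ)*(w:ℤ)
        + 3 * ((Nat.choose k 2 : ℕ) : ℤ) + 4 * ((Nat.choose j 2 : ℕ) : ℤ)
        + (j:ℤ) * (3*(k:ℤ) + 1) := by zify at hE'; push_cast at hE' ⊢; linarith only [hE']
    exact zlem3 _ _ _ _ _ _ _ hE'' (cast_twice_choose k) (cast_twice_choose j)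
  have key := arith_core ((n : ℤ) - ν) ν m k j w (edgeCount G)
    (by exact_mod_cast hν) (by push_cast; omega) (by exact_mod_cast hmν)
    (by exact_mod_cast hkjm) (by positivity) (by positivity) (by positivity)
    (by push_cast; omega) hAw2 hAlt hAE0 hAE1
  have final := zlem4 _ _ _ _ key (cast_twice_choose ν)
  zify
  rw [hcast]
  exact final
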